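/- arXiv:2005.00178 — 2 statements merged into one kernel-verified Lean document; each statement's English description precedes it below -/
import Mathlib

section
/- Let ℓ : ℝ × ℝ → ℝ₊ be convex in its first argument, G a compact group with Haar probability measure λ acting on X, f : X → ℝ measurable with f(g·x) integrable in g, and f°(x) = ∫_G f(gx) λ(dg). Then for each data point (x,y), E_{g∼λ}[ℓ(f(gx),y)] ≥ ℓ(f°(x),y); hence the augmented empirical risk of f is at least the empirical risk of f°. -/
open MeasureTheory

/-- Jensen's inequality for feature averaging: with `ℓ` convex in its first argument and
`f°(x) = ∫ f(g•x) dλ(g)`, we have `ℓ(f°(x), y) ≤ ∫ ℓ(f(g•x), y) dλ(g)` pointwise, and hence the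
empirical risk of `f°` is at most the augmented empirical risk of `f`. -/
theorem loss_symmetrization_le {G X : Type*}
    [Group G] [TopologicalSpace G] [IsTopologicalGroup G] [CompactSpace G]
    [MeasurableSpace G] [BorelSpace G]
    [MeasurableSpace X] [MulAction G X] [MeasurableSMul G X]
    (lam : Measure G) [lam.IsHaarMeasure] [IsProbabilityMeasure lam]
    (ℓ : ℝ → ℝ → ℝ) (hℓpos : ∀ z y, 0 ≤ ℓ z y)
    (hconv : ∀ y, ConvexOn ℝ Set.univ fun z => ℓ z y)
    (f : X → ℝ) (hf : Measurable f)
    (hfint : ∀ x, Integrable (fun g => f (g • x)) lam)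
    (hℓint : ∀ x y, Integrable (fun g => ℓ (f (g • x)) y) lam) :
    (∀ x y, ℓ (∫ g, f (g • x) ∂lam) y ≤ ∫ g, ℓ (f (g • x)) y ∂lam) ∧
    ∀ (n : ℕ) (D : Fin n → X × ℝ),
      ((1 : ℝ) / n) * ∑ i : Fin n, ℓ (∫ g, f (g • (D i).1) ∂lam) ((D i).2)
        ≤ ((1 : ℝ) / n) * ∑ i : Fin n, ∫ g, ℓ (f (g • (D i).1)) ((D i).2) ∂lam := by
  have key : ∀ x y, ℓ (∫ g, f (g • x) ∂lam) y ≤ ∫ g, ℓ (f (g • x)) y ∂lam := by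
    intro x y
    have hcont : ContinuousOn (fun z => ℓ z y) Set.univ := by
      have := (hconv y).continuousOn_interior
      rwa [interior_univ] at this
    exact (hconv y).map_integral_le hcont isClosed_univ
      (Filter.Eventually.of_forall fun _ => Set.mem_univ _) (hfint x) (hℓint x y)
  refine ⟨key, fun n D => ?_⟩
  have h01 : (0:ℝ) ≤ 1 / n := by positivity
  exact mul_le_mul_of_nonneg_left
    (Finset.sum_le_sum fun i _ => key (D i).1 (D i).2) h01
end

section
/- Let G be a compact group with a linear representation ρ : G → GL(V) on a finite-dimensional real vector space V, let the data set (Xᵢ,Yᵢ)ᵢ₌₁ⁿ span V, and let ℓ be strictly convex in its first argument. Then the unique minimizer ŵ of the augmented risk w ↦ (1/n)Σᵢ E_{g∼λ}[ℓ(wᵀρ_g Xᵢ, Yᵢ)] satisfies ρ*_g ŵ = ŵ for λ-almost all g ∈ G, so the linear predictor f_ŵ(x) = ŵᵀx is G-invariant. -/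
set_option maxHeartbeats 1000000


open MeasureTheory

/-- For a compact group `G` with a linear representation `ρ` on a finite-dimensional real inner
product space `V`, data spanning `V`, and a loss strictly convex in its first argument, the unique
minimizer `ŵ` of the augmented risk satisfies `ρ*_g ŵ = ŵ` for `λ`-almost all `g`, i.e.
`⟪ŵ, ρ_g x⟫ = ⟪ŵ, x⟫` for all `x`; the linear predictor `x ↦ ⟪ŵ, x⟫` is `G`-invariant. -/
theorem augmented_risk_minimizer_invariant {G V : Type*}
    [Group G] [TopologicalSpace G] [IsTopologicalGroup G] [CompactSpace G]
    [MeasurableSpace G] [BorelSpace G]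
    [NormedAddCommGroup V] [InnerProductSpace ℝ V] [FiniteDimensional ℝ V]
    (lam : Measure G) [lam.IsHaarMeasure] [IsProbabilityMeasure lam]
    (ρ : G →* (V ≃ₗ[ℝ] V))
    (n : ℕ) (Xd : Fin n → V) (Yd : Fin n → ℝ)
    (hspan : Submodule.span ℝ (Set.range Xd) = ⊤)
    (ℓ : ℝ → ℝ → ℝ)
    (hconv : ∀ y, StrictConvexOn ℝ Set.univ fun z => ℓ z y)
    (wHat : V)
    (hmin : ∀ w : V, w ≠ wHat →
      ((1 : ℝ) / n) * ∑ i : Fin n, ∫ g, ℓ (inner ℝ wHat (ρ g (Xd i)) : ℝ) (Yd i) ∂lam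
        < ((1 : ℝ) / n) * ∑ i : Fin n, ∫ g, ℓ (inner ℝ w (ρ g (Xd i)) : ℝ) (Yd i) ∂lam) :
    ∀ᵐ g ∂lam, ∀ x : V, (inner ℝ wHat (ρ g x) : ℝ) = inner ℝ wHat x := by
  have key : ∀ h : G, ∀ x : V, (inner ℝ wHat (ρ h x) : ℝ) = inner ℝ wHat x := by
    intro h x
    set w := LinearMap.adjoint ((ρ h).toLinearMap) wHat with hw
    have hinner : ∀ v : V, (inner ℝ w v : ℝ) = inner ℝ wHat (ρ h v) := fun v =>
      LinearMap.adjoint_inner_left ((ρ h).toLinearMap) v wHat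
    have hrisk : ((1 : ℝ) / n) * ∑ i : Fin n, ∫ g, ℓ (inner ℝ w (ρ g (Xd i)) : ℝ) (Yd i) ∂lam
        = ((1 : ℝ) / n) * ∑ i : Fin n, ∫ g, ℓ (inner ℝ wHat (ρ g (Xd i)) : ℝ) (Yd i) ∂lam := by
      congr 1
      refine Finset.sum_congr rfl fun i _ => ?_
      calc ∫ g, ℓ (inner ℝ w (ρ g (Xd i)) : ℝ) (Yd i) ∂lam
          = ∫ g, ℓ (inner ℝ wHat (ρ (h * g) (Xd i)) : ℝ) (Yd i) ∂lam := by
            refine integral_congr_ae (ae_of_all _ fun g => ?_)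
            simp only [hinner, map_mul]
            rfl
        _ = ∫ g, ℓ (inner ℝ wHat (ρ g (Xd i)) : ℝ) (Yd i) ∂lam :=
            integral_mul_left_eq_self (fun g => ℓ (inner ℝ wHat (ρ g (Xd i)) : ℝ) (Yd i)) h
    have hw_eq : w = wHat := by
      by_contra hne
      have h1 := hmin w hne
      rw [hrisk] at h1
      exact lt_irrefl _ h1
    have h2 := hinner x
    rw [hw_eq] at h2
    exact h2.symm
  exact ae_of_all _ fun g => key g
end
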